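/- arXiv:2303.16623 — 3 statements merged into one kernel-verified Lean document; each statement's English description precedes it below -/
import Mathlib

section
/- Let E be a vector space, F a proper subspace, and A ⊆ E a linearly independent set with span(A) ∩ F = {0}. Then there exists a subspace V of E with span(A) ⊆ V, V ∩ F = {0}, and V linearly isomorphic to E/F. -/
theorem extend_indep_to_complement {K E : Type*} [Field K] [AddCommGroup E] [Module K E]
    (F : Submodule K E) (hF : F ≠ ⊤) (A : Set E)
    (hA : LinearIndependent K ((↑) : A → E))
    (hAF : Submodule.span K A ⊓ F = ⊥) :
    ∃ V : Submodule K E, Submodule.span K A ≤ V ∧ V ⊓ F = ⊥ ∧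
      Nonempty (V ≃ₗ[K] E ⧸ F) := by
  set S := Submodule.span K A with hS
  obtain ⟨q, hq⟩ := Submodule.exists_isCompl (S ⊔ F)
  refine ⟨S ⊔ q, le_sup_left, ?_, ?_⟩
  · rw [eq_bot_iff]
    rintro x ⟨hxSq, hxF⟩
    obtain ⟨a, ha, b, hb, rfl⟩ := Submodule.mem_sup.mp hxSq
    have hbp : b ∈ S ⊔ F := by
      have : b = (a + b) - a := by abel
      rw [this]
      exact Submodule.sub_mem _ (le_sup_right (a := S) hxF) (le_sup_left (b := F) ha)
    have hb0 : b = 0 := by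
      have := hq.inf_eq_bot
      have : b ∈ (S ⊔ F) ⊓ q := ⟨hbp, hb⟩
      rwa [hq.inf_eq_bot, Submodule.mem_bot] at this
    subst hb0
    have : a ∈ S ⊓ F := ⟨ha, by simpa using hxF⟩
    rw [hAF, Submodule.mem_bot] at this
    simpa [this]
  · have hcompl : IsCompl (S ⊔ q) F := by
      constructor
      · rw [disjoint_iff, eq_bot_iff]
        rintro x ⟨hxSq, hxF⟩
        obtain ⟨a, ha, b, hb, rfl⟩ := Submodule.mem_sup.mp hxSq
        have hbp : b ∈ S ⊔ F := by
          have : b = (a + b) - a := by abel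
          rw [this]
          exact Submodule.sub_mem _ (le_sup_right (a := S) hxF) (le_sup_left (b := F) ha)
        have hb0 : b = 0 := by
          have : b ∈ (S ⊔ F) ⊓ q := ⟨hbp, hb⟩
          rwa [hq.inf_eq_bot, Submodule.mem_bot] at this
        subst hb0
        have : a ∈ S ⊓ F := ⟨ha, by simpa using hxF⟩
        rw [hAF, Submodule.mem_bot] at this
        simpa [this]
      · rw [codisjoint_iff]
        have : S ⊔ q ⊔ F = (S ⊔ F) ⊔ q := by
          rw [sup_assoc, sup_comm q F, ← sup_assoc]
        rw [this, hq.sup_eq_top]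
    exact ⟨(Submodule.quotientEquivOfIsCompl F (S ⊔ q) hcompl.symm).symm⟩
end

section
/- Let X be a normed space, {x_γ : γ ∈ Γ} a linearly independent family in X, and 0 < p. Then the family of sequences f_γ = (n^{-1/p} · x_γ)_{n∈ℕ} is linearly independent in the space of X-valued sequences, and every nontrivial finite linear combination of the f_γ lies in ⋂_{q>p} ℓ_q(X) \ ℓ_p(X). -/
lemma aux_summable_npow_iff {e : ℝ} :
    Summable (fun n : ℕ => ((n : ℝ) + 1) ^ e) ↔ e < -1 := by
  have h1 : (fun n : ℕ => ((n : ℝ) + 1) ^ e)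
      = fun n : ℕ => ((↑(n + 1) : ℝ)) ^ e := by
    funext n; push_cast; ring_nf
  rw [h1]
  exact (summable_nat_add_iff 1).trans Real.summable_nat_rpow

theorem indep_family_in_intersection {X Γ : Type*} [NormedAddCommGroup X]
    [NormedSpace ℝ X] (x : Γ → X) (hx : LinearIndependent ℝ x)
    (p : ℝ) (hp : 0 < p) :
    LinearIndependent ℝ (fun γ : Γ => fun n : ℕ => ((n + 1 : ℝ)) ^ (-(1 / p)) • x γ) ∧
    ∀ c : Γ →₀ ℝ, c ≠ 0 →
      (∀ q : ℝ, p < q →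
        Summable (fun n : ℕ =>
          ‖c.sum fun γ a => a • (((n + 1 : ℝ)) ^ (-(1 / p)) • x γ)‖ ^ q)) ∧
      ¬ Summable (fun n : ℕ =>
          ‖c.sum fun γ a => a • (((n + 1 : ℝ)) ^ (-(1 / p)) • x γ)‖ ^ p) := by
  have hrpos : ∀ n : ℕ, (0:ℝ) < ((n : ℝ) + 1) ^ (-(1 / p)) := fun n =>
    Real.rpow_pos_of_pos (by positivity) _
  constructor
  · let L : X →ₗ[ℝ] (ℕ → X) :=
      { toFun := fun v n => ((n : ℝ) + 1) ^ (-(1 / p)) • v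
        map_add' := fun a b => by funext n; simp [smul_add]
        map_smul' := fun c v => by
          simp only [RingHom.id_apply]; funext n; exact smul_comm _ _ _ }
    have hinj : Function.Injective L := by
      intro a b h
      have h0 := congrFun h 0
      simpa [L] using h0
    exact hx.map' L (LinearMap.ker_eq_bot.mpr hinj)
  · intro c hc
    set v : X := c.sum fun γ a => a • x γ with hv
    have hv0 : v ≠ 0 := by
      intro h
      apply hc
      refine linearIndependent_iff.mp hx c ?_
      rw [Finsupp.linearCombination_apply]
      exact h
    have key : ∀ n : ℕ,
        (c.sum fun γ a => a • (((n : ℝ) + 1) ^ (-(1 / p)) • x γ))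
          = ((n : ℝ) + 1) ^ (-(1 / p)) • v := by
      intro n
      rw [hv, Finsupp.smul_sum]
      exact Finsupp.sum_congr fun γ _ => smul_comm _ _ _
    have hnorm : ∀ n : ℕ, ∀ s : ℝ,
        ‖c.sum fun γ a => a • (((n : ℝ) + 1) ^ (-(1 / p)) • x γ)‖ ^ s
          = ((n : ℝ) + 1) ^ (-(1 / p) * s) * ‖v‖ ^ s := by
      intro n s
      rw [key n, norm_smul, Real.norm_eq_abs, abs_of_pos (hrpos n),
        Real.mul_rpow (le_of_lt (hrpos n)) (norm_nonneg v),
        ← Real.rpow_mul (by positivity : (0:ℝ) ≤ (n:ℝ)+1)]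
    constructor
    · intro q hq
      have he : -(1 / p) * q < -1 := by
        have h1 : 1 < q / p := (one_lt_div hp).mpr hq
        have : -(1 / p) * q = -(q / p) := by ring
        rw [this]; linarith
      have hs := (aux_summable_npow_iff.mpr he).mul_right (‖v‖ ^ q)
      exact hs.congr fun n => (hnorm n q).symm
    · intro h
      have hC : (0:ℝ) < ‖v‖ ^ p := Real.rpow_pos_of_pos (norm_pos_iff.mpr hv0) _
      have h2 : Summable (fun n : ℕ => ((n : ℝ) + 1) ^ (-(1 / p) * p)) := by
        have := h.div_const (‖v‖ ^ p)
        refine this.congr fun n => ?_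
        rw [hnorm n p, mul_div_cancel_right₀ _ (ne_of_gt hC)]
      have he : -(1 / p) * p = -1 := by field_simp
      rw [he] at h2
      exact absurd (aux_summable_npow_iff.mp h2) (lt_irrefl _)
end

section
/- For 0 < p, the space L^p[0,1] \ ⋃_{q>p} L^q[0,1] contains, together with 0, a linear subspace of dimension continuum; in particular, there exists a function in L^p[0,1] not belonging to L^q[0,1] for any q > p. -/
open MeasureTheory

namespace LpLqAux

open Set Filter

noncomputable section

/-- blocks: `I n = (2^{-(n+1)}, 2^{-n}]` -/
def I (n : ℕ) : Set ℝ := Set.Ioc (((2:ℝ)^(n+1))⁻¹) (((2:ℝ)^n)⁻¹)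

/-- the block index of `x` -/
def nx (x : ℝ) : ℕ := (⌊Real.logb 2 x⁻¹⌋).toNat

/-- heights -/
def c (p : ℝ) (n : ℕ) : ℝ := ((2:ℝ)^(n+1) / ((n:ℝ)+1)^2) ^ (1/p)

/-- the base function -/
def h (p : ℝ) (x : ℝ) : ℝ := if x ∈ Set.Ioc (0:ℝ) 1 then c p (nx x) else 0

/-- an almost disjoint family of infinite subsets of ℕ indexed by ℝ -/
def B (r : ℝ) : Set ℕ := Set.range fun k : ℕ => Nat.pair k (Encodable.encode (⌊r * 2^k⌋ : ℤ))

def S (r : ℝ) : Set ℝ := ⋃ n ∈ B r, I n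

/-- the continuum family of functions -/
def F (p : ℝ) (r : ℝ) : ℝ → ℝ := (S r).indicator (h p)

lemma c_pos {p : ℝ} (n : ℕ) : 0 < c p n := by
  have : (0:ℝ) < (2:ℝ)^(n+1) / ((n:ℝ)+1)^2 := by positivity
  exact Real.rpow_pos_of_pos this _

lemma c_rpow {p : ℝ} (hp : 0 < p) (n : ℕ) :
    c p n ^ p = (2:ℝ)^(n+1) / ((n:ℝ)+1)^2 := by
  have hb : (0:ℝ) ≤ (2:ℝ)^(n+1) / ((n:ℝ)+1)^2 := by positivity
  rw [c, ← Real.rpow_mul hb, one_div, inv_mul_cancel₀ hp.ne', Real.rpow_one]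

lemma I_subset_Ioc (n : ℕ) : I n ⊆ Set.Ioc (0:ℝ) 1 := by
  intro x hx
  constructor
  · exact lt_trans (by positivity) hx.1
  · exact hx.2.trans (by
      rw [inv_le_one_iff₀]
      right
      exact one_le_pow₀ one_le_two)

lemma I_subset_Icc (n : ℕ) : I n ⊆ Set.Icc (0:ℝ) 1 :=
  (I_subset_Ioc n).trans Set.Ioc_subset_Icc_self

lemma I_lt_aux {n m : ℕ} {x : ℝ} (hnm : n < m) (hn : x ∈ I n) (hm : x ∈ I m) : False := by
  have h1 : ((2:ℝ)^m)⁻¹ ≤ ((2:ℝ)^(n+1))⁻¹ := by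
    apply inv_anti₀ (by positivity)
    exact pow_le_pow_right₀ one_le_two hnm
  exact absurd (hm.2.trans_lt (h1.trans_lt hn.1)) (lt_irrefl x)

lemma I_unique {n m : ℕ} {x : ℝ} (hn : x ∈ I n) (hm : x ∈ I m) : n = m := by
  by_contra hne
  rcases Nat.lt_or_ge n m with hlt | hge
  · exact I_lt_aux hlt hn hm
  · exact I_lt_aux (lt_of_le_of_ne hge (Ne.symm hne)) hm hn

lemma volume_I (n : ℕ) : volume (I n) = ENNReal.ofReal (((2:ℝ)^(n+1))⁻¹) := by
  rw [I, Real.volume_Ioc]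
  congr 1
  have h2n : ((2:ℝ)^n) ≠ 0 := by positivity
  field_simp [pow_succ]
  ring

lemma mem_I_nx {x : ℝ} (hx : x ∈ Set.Ioc (0:ℝ) 1) : x ∈ I (nx x) := by
  have hx0 : 0 < x := hx.1
  have hxinv : 0 < x⁻¹ := inv_pos.mpr hx0
  have h1 : (1:ℝ) ≤ x⁻¹ := by
    nlinarith [mul_inv_cancel₀ hx0.ne', hx.2]
  set L := Real.logb 2 x⁻¹ with hLdef
  have hL : 0 ≤ L := Real.logb_nonneg one_lt_two h1
  have hfloor : (0:ℤ) ≤ ⌊L⌋ := Int.le_floor.mpr (by exact_mod_cast hL)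
  have hcast : ((nx x : ℕ) : ℝ) = ((⌊L⌋ : ℤ) : ℝ) := by
    rw [nx]
    exact_mod_cast congrArg (fun z : ℤ => (z : ℝ)) (Int.toNat_of_nonneg hfloor)
  have hle : ((nx x : ℕ) : ℝ) ≤ L := by rw [hcast]; exact Int.floor_le L
  have hlt : L < ((nx x : ℕ) : ℝ) + 1 := by rw [hcast]; exact Int.lt_floor_add_one L
  constructor
  · -- (2^(nx x + 1))⁻¹ < x
    have h2 : x⁻¹ < (2:ℝ) ^ (((nx x : ℕ) : ℝ) + 1) :=
      (Real.logb_lt_iff_lt_rpow one_lt_two hxinv).mp hlt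
    have h3 : (2:ℝ) ^ (((nx x : ℕ) : ℝ) + 1) = (2:ℝ) ^ (nx x + 1) := by
      rw [← Real.rpow_natCast 2 (nx x + 1)]
      push_cast
      ring_nf
    rw [h3] at h2
    have h4 : ((2:ℝ) ^ (nx x + 1))⁻¹ < (x⁻¹)⁻¹ := by
      apply inv_strictAnti₀ hxinv h2
    rwa [inv_inv] at h4
  · -- x ≤ (2^(nx x))⁻¹
    have h2 : (2:ℝ) ^ (((nx x : ℕ) : ℝ)) ≤ x⁻¹ :=
      (Real.le_logb_iff_rpow_le one_lt_two hxinv).mp hle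
    rw [Real.rpow_natCast] at h2
    have h4 : (x⁻¹)⁻¹ ≤ ((2:ℝ) ^ (nx x))⁻¹ := inv_anti₀ (by positivity) h2
    rwa [inv_inv] at h4

lemma nx_eq {n : ℕ} {x : ℝ} (hx : x ∈ I n) : nx x = n :=
  I_unique (mem_I_nx (I_subset_Ioc n hx)) hx

lemma h_eq_on_I {p : ℝ} {n : ℕ} {x : ℝ} (hx : x ∈ I n) : h p x = c p n := by
  rw [h, if_pos (I_subset_Ioc n hx), nx_eq hx]

lemma mu_I (n : ℕ) :
    (volume.restrict (Set.Icc (0:ℝ) 1)) (I n) = ENNReal.ofReal (((2:ℝ)^(n+1))⁻¹) := by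
  rw [Measure.restrict_apply (show MeasurableSet (I n) from measurableSet_Ioc),
    Set.inter_eq_self_of_subset_left (I_subset_Icc n), volume_I]

lemma I_nonempty (n : ℕ) : ((2:ℝ)^n)⁻¹ ∈ I n := by
  constructor
  · apply inv_strictAnti₀ (by positivity)
    exact pow_lt_pow_right₀ one_lt_two (Nat.lt_succ_self n)
  · exact le_refl _

lemma B_infinite (r : ℝ) : (B r).Infinite := by
  apply Set.infinite_range_of_injective
  intro k k' hkk'
  exact (Nat.pair_eq_pair.mp hkk').1

lemma B_inter_finite {r r' : ℝ} (hrr' : r ≠ r') : (B r ∩ B r').Finite := by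
  have hd : 0 < |r - r'| := abs_pos.mpr (sub_ne_zero.mpr hrr')
  have hsub : (B r ∩ B r') ⊆
      (fun k : ℕ => Nat.pair k (Encodable.encode (⌊r * 2^k⌋ : ℤ))) ''
        {k : ℕ | (k:ℝ) < |r - r'|⁻¹} := by
    rintro n ⟨⟨k, rfl⟩, ⟨k', hk'⟩⟩
    have hk : k' = k := (Nat.pair_eq_pair.mp hk').1
    subst hk
    have henc := (Nat.pair_eq_pair.mp hk').2
    have hfloor : (⌊r' * 2^k'⌋ : ℤ) = ⌊r * 2^k'⌋ := Encodable.encode_injective henc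
    refine ⟨k', ?_, rfl⟩
    have h2k : (0:ℝ) < 2^k' := by positivity
    have h1 : (⌊r * 2^k'⌋ : ℝ) ≤ r * 2^k' := Int.floor_le _
    have h2 : r * 2^k' < ⌊r * 2^k'⌋ + 1 := Int.lt_floor_add_one _
    have h3 : (⌊r * 2^k'⌋ : ℝ) ≤ r' * 2^k' := by rw [← hfloor]; exact Int.floor_le _
    have h4 : r' * 2^k' < (⌊r * 2^k'⌋ : ℝ) + 1 := by rw [← hfloor]; exact Int.lt_floor_add_one _
    have habs : |r - r'| * 2^k' < 1 := by
      have e : (r - r') * 2^k' = r * 2^k' - r' * 2^k' := by ring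
      have e2 : |(r - r') * 2^k'| = |r - r'| * 2^k' := by rw [abs_mul, abs_of_pos h2k]
      rw [← e2, e, abs_sub_lt_iff]
      exact ⟨by linarith, by linarith⟩
    have hklt : (k':ℝ) < 2^k' := by exact_mod_cast Nat.lt_two_pow_self (n := k')
    have h2lt : (2:ℝ)^k' < |r - r'|⁻¹ := by
      rw [← one_div, lt_div_iff₀ hd]
      linarith [habs]
    exact Set.mem_setOf.mpr (hklt.trans h2lt)
  apply Set.Finite.subset (Set.Finite.image _ ?_) hsub
  have : {k : ℕ | (k:ℝ) < |r - r'|⁻¹} ⊆ Set.Iio ⌈|r - r'|⁻¹⌉₊ := by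
    intro k hk
    exact Set.mem_Iio.mpr (Nat.lt_ceil.mpr hk)
  exact (Set.finite_Iio _).subset this

lemma h_nonneg (p : ℝ) (x : ℝ) : 0 ≤ h p x := by
  rw [h]; split
  · exact (c_pos _).le
  · exact le_refl _

lemma F_apply_mem {p r : ℝ} {n : ℕ} {x : ℝ} (hn : n ∈ B r) (hx : x ∈ I n) :
    F p r x = c p n := by
  have hxS : x ∈ S r := Set.mem_biUnion hn hx
  rw [F, Set.indicator_of_mem hxS, h_eq_on_I hx]

lemma F_apply_not_mem {p r : ℝ} {n : ℕ} {x : ℝ} (hn : n ∉ B r) (hx : x ∈ I n) :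
    F p r x = 0 := by
  rw [F, Set.indicator_of_notMem]
  intro hmem
  rw [S, Set.mem_iUnion₂] at hmem
  obtain ⟨m, hm, hxm⟩ := hmem
  exact hn ((I_unique hxm hx) ▸ hm)

lemma abs_F_le (p r : ℝ) (x : ℝ) : |F p r x| ≤ h p x := by
  by_cases hx : x ∈ S r
  · rw [F, Set.indicator_of_mem hx, abs_of_nonneg (h_nonneg p x)]
  · rw [F, Set.indicator_of_notMem hx, abs_zero]
    exact h_nonneg p x

lemma measurable_h (p : ℝ) : Measurable (h p) := by
  have he : h p = (Set.Ioc (0:ℝ) 1).indicator (fun x => c p (nx x)) := by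
    funext x; rw [h, Set.indicator_apply]
  rw [he]
  apply Measurable.indicator _ measurableSet_Ioc
  have h1 : Measurable fun x : ℝ => Real.logb 2 x⁻¹ := by
    simp only [Real.logb]
    exact (Real.measurable_log.comp measurable_inv).div_const _
  have h2 : Measurable fun x : ℝ => ⌊Real.logb 2 x⁻¹⌋ := Int.measurable_floor.comp h1
  exact (Measurable.of_discrete (f := fun z : ℤ => c p z.toNat)).comp h2

lemma measurableSet_S (r : ℝ) : MeasurableSet (S r) :=
  MeasurableSet.biUnion (Set.to_countable _)
    (fun n _ => show MeasurableSet (I n) from measurableSet_Ioc)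

lemma measurable_F (p r : ℝ) : Measurable (F p r) :=
  (measurable_h p).indicator (measurableSet_S r)

lemma summable_inv_sq : Summable (fun n : ℕ => 1 / ((n:ℝ)+1)^2) := by
  have h0 : Summable (fun n : ℕ => 1 / ((n:ℝ))^2) :=
    Real.summable_one_div_nat_pow.mpr one_lt_two
  have := (summable_nat_add_iff 1).mpr h0
  refine this.congr fun n => ?_
  push_cast
  ring

lemma lintegral_pow_h_ne_top {p : ℝ} (hp : 0 < p) :
    ∫⁻ x, (↑‖h p x‖₊ : ENNReal) ^ p ∂(volume.restrict (Set.Icc (0:ℝ) 1)) ≠ ⊤ := by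
  set μ := volume.restrict (Set.Icc (0:ℝ) 1) with hμ
  have hpt : ∀ x, (↑‖h p x‖₊ : ENNReal) ^ p ≤
      ∑' n, (I n).indicator (fun _ => ENNReal.ofReal (c p n ^ p)) x := by
    intro x
    by_cases hx : x ∈ Set.Ioc (0:ℝ) 1
    · have hxI := mem_I_nx hx
      have he : (↑‖h p x‖₊ : ENNReal) ^ p =
          (I (nx x)).indicator (fun _ => ENNReal.ofReal (c p (nx x) ^ p)) x := by
        rw [Set.indicator_of_mem hxI, h, if_pos hx, ← enorm_eq_nnnorm, Real.enorm_eq_ofReal_abs,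
          abs_of_pos (c_pos _), ← ENNReal.ofReal_rpow_of_nonneg (c_pos _).le hp.le]
      rw [he]
      exact ENNReal.le_tsum _
    · rw [h, if_neg hx]
      simp [ENNReal.zero_rpow_of_pos hp]
  have hterm : ∀ n : ℕ, ENNReal.ofReal (c p n ^ p) * μ (I n) =
      ENNReal.ofReal (1 / ((n:ℝ)+1)^2) := by
    intro n
    rw [hμ, mu_I, ← ENNReal.ofReal_mul (Real.rpow_nonneg (c_pos n).le p), c_rpow hp]
    congr 1
    have h1 : ((n:ℝ)+1)^2 ≠ 0 := by positivity
    have h2 : ((2:ℝ)^(n+1)) ≠ 0 := by positivity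
    field_simp
  have hle : ∫⁻ x, (↑‖h p x‖₊ : ENNReal) ^ p ∂μ ≤
      ENNReal.ofReal (∑' n : ℕ, 1 / ((n:ℝ)+1)^2) := by
    calc ∫⁻ x, (↑‖h p x‖₊ : ENNReal) ^ p ∂μ
        ≤ ∫⁻ x, ∑' n, (I n).indicator (fun _ => ENNReal.ofReal (c p n ^ p)) x ∂μ :=
          lintegral_mono hpt
      _ = ∑' n, ∫⁻ x, (I n).indicator (fun _ => ENNReal.ofReal (c p n ^ p)) x ∂μ :=
          lintegral_tsum fun n =>
            (measurable_const.indicator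
              (show MeasurableSet (I n) from measurableSet_Ioc)).aemeasurable
      _ = ∑' n, ENNReal.ofReal (c p n ^ p) * μ (I n) := by
          refine tsum_congr fun n => ?_
          rw [lintegral_indicator (show MeasurableSet (I n) from measurableSet_Ioc),
            setLIntegral_const]
      _ = ∑' n : ℕ, ENNReal.ofReal (1 / ((n:ℝ)+1)^2) := tsum_congr hterm
      _ = ENNReal.ofReal (∑' n : ℕ, 1 / ((n:ℝ)+1)^2) :=
          (ENNReal.ofReal_tsum_of_nonneg (fun n => by positivity) summable_inv_sq).symm
  exact ne_top_of_le_ne_top ENNReal.ofReal_ne_top hle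

lemma memLp_h {p : ℝ} (hp : 0 < p) :
    MemLp (h p) (ENNReal.ofReal p) (volume.restrict (Set.Icc (0:ℝ) 1)) := by
  refine ⟨(measurable_h p).aestronglyMeasurable, ?_⟩
  rw [eLpNorm_eq_lintegral_rpow_enorm_toReal
    (by simp [ENNReal.ofReal_eq_zero]; linarith) ENNReal.ofReal_ne_top,
    ENNReal.toReal_ofReal hp.le]
  exact ENNReal.rpow_lt_top_of_nonneg (by positivity) (lintegral_pow_h_ne_top hp)

lemma memLp_F {p : ℝ} (hp : 0 < p) (r : ℝ) :
    MemLp (F p r) (ENNReal.ofReal p) (volume.restrict (Set.Icc (0:ℝ) 1)) := by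
  refine (memLp_h hp).of_le (measurable_F p r).aestronglyMeasurable (ae_of_all _ fun x => ?_)
  rw [Real.norm_eq_abs, Real.norm_eq_abs, abs_of_nonneg (h_nonneg p x)]
  exact abs_F_le p r x

lemma one_le_t {p q : ℝ} (hp : 0 < p) (hq : p < q) {a : ℝ} (ha : a ≠ 0) :
    ∃ N : ℕ, ∀ n ≥ N, 1 ≤ |a| ^ q * c p n ^ q * ((2:ℝ)^(n+1))⁻¹ := by
  have hq0 : 0 < q := hp.trans hq
  have hs : 1 < q / p := (one_lt_div hp).mpr hq
  have hr : 1 < (2:ℝ) ^ (q/p - 1) := by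
    have h0 := Real.rpow_lt_rpow_of_exponent_lt one_lt_two
      (show (0:ℝ) < q/p - 1 by linarith)
    rwa [Real.rpow_zero] at h0
  set r := (2:ℝ) ^ (q/p - 1) with hrdef
  have hrpos : 0 < r := lt_trans one_pos hr
  have hε : 0 < |a| ^ q := Real.rpow_pos_of_pos (abs_pos.mpr ha) q
  set K := ⌈2 * (q/p)⌉₊ with hKdef
  have htend := tendsto_pow_const_div_const_pow_of_one_lt K hr
  have hev : ∀ᶠ n : ℕ in atTop, (n:ℝ)^K / r^n < |a| ^ q :=
    htend.eventually_lt_const hε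
  obtain ⟨N, hN⟩ := eventually_atTop.mp hev
  refine ⟨N, fun n hn => ?_⟩
  have hmain := hN (n+1) (le_trans hn (Nat.le_succ n))
  set m : ℝ := (n:ℝ) + 1 with hm
  have hm1 : (1:ℝ) ≤ m := by
    rw [hm]; linarith [Nat.cast_nonneg (α := ℝ) n]
  have hmpos : (0:ℝ) < m := lt_of_lt_of_le one_pos hm1
  have hbnum : (0:ℝ) ≤ (2:ℝ)^(n+1) := by positivity
  have hb : (0:ℝ) ≤ (2:ℝ)^(n+1) / m^2 := by positivity
  have hcq : c p n ^ q = ((2:ℝ)^(n+1)) ^ (q/p) / (m^2) ^ (q/p) := by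
    rw [c, ← Real.rpow_mul hb, one_div, inv_mul_eq_div]
    exact Real.div_rpow hbnum (sq_nonneg m) (q/p)
  have hpow : ((2:ℝ)^(n+1)) ^ (q/p) * ((2:ℝ)^(n+1))⁻¹ = r^(n+1) := by
    calc ((2:ℝ)^(n+1)) ^ (q/p) * ((2:ℝ)^(n+1))⁻¹
        = ((2:ℝ) ^ (((n+1:ℕ)):ℝ)) ^ (q/p) * ((2:ℝ) ^ (((n+1:ℕ)):ℝ))⁻¹ := by
          rw [Real.rpow_natCast]
      _ = (2:ℝ) ^ ((((n+1:ℕ)):ℝ) * (q/p)) * (2:ℝ) ^ (-(((n+1:ℕ)):ℝ)) := by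
          rw [← Real.rpow_mul (by norm_num : (0:ℝ) ≤ 2),
            Real.rpow_neg (by norm_num : (0:ℝ) ≤ 2), Real.rpow_natCast]
      _ = (2:ℝ) ^ ((((n+1:ℕ)):ℝ) * (q/p) + -(((n+1:ℕ)):ℝ)) :=
          (Real.rpow_add two_pos _ _).symm
      _ = (2:ℝ) ^ ((q/p - 1) * (((n+1:ℕ)):ℝ)) := by ring_nf
      _ = r ^ (((n+1:ℕ)):ℝ) := by
          rw [hrdef, Real.rpow_mul (by norm_num : (0:ℝ) ≤ 2)]
      _ = r ^ (n+1) := Real.rpow_natCast r (n+1)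
  have hden : (m^2) ^ (q/p) ≤ m ^ K := by
    have e1 : ((m^2 : ℝ)) ^ (q/p) = m ^ (2 * (q/p)) := by
      rw [← Real.rpow_natCast m 2, ← Real.rpow_mul hmpos.le]
      norm_num
    have e2 : m ^ (2 * (q/p)) ≤ m ^ ((K:ℕ):ℝ) :=
      Real.rpow_le_rpow_of_exponent_le hm1 (Nat.le_ceil _)
    rw [e1, ← Real.rpow_natCast m K]
    exact e2
  have hdpos : (0:ℝ) < (m^2) ^ (q/p) := Real.rpow_pos_of_pos (by positivity) _
  have hrn : (0:ℝ) < r ^ (n+1) := by positivity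
  have hmain' : m ^ K < |a|^q * r^(n+1) := by
    have hc : ((n+1:ℕ):ℝ) = m := by rw [hm]; push_cast; ring
    rw [hc, div_lt_iff₀ hrn] at hmain
    exact hmain
  have e3 : |a|^q * c p n ^ q * ((2:ℝ)^(n+1))⁻¹ = |a|^q * r^(n+1) / (m^2)^(q/p) := by
    rw [hcq, ← hpow]; ring
  rw [e3, le_div_iff₀ hdpos]
  calc 1 * (m^2)^(q/p) = (m^2)^(q/p) := one_mul _
    _ ≤ m^K := hden
    _ ≤ |a|^q * r^(n+1) := hmain'.le

lemma B_diff_infinite (j : ℝ) (t : Finset ℝ) (hj : j ∉ t) :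
    (B j \ ⋃ i ∈ t, B i).Infinite := by
  have hfin : (B j ∩ ⋃ i ∈ (t : Set ℝ), B i).Finite := by
    rw [Set.inter_iUnion₂]
    apply Set.Finite.biUnion t.finite_toSet
    intro i hi
    exact B_inter_finite (fun e => hj (e ▸ hi))
  have hinf := (B_infinite j).diff hfin
  rwa [Set.diff_self_inter] at hinf

lemma sum_eval {p : ℝ} (l : ℝ →₀ ℝ) {j : ℝ} (hj : j ∈ l.support) {n : ℕ} {x : ℝ}
    (hnj : n ∈ B j) (hni : ∀ i ∈ l.support, i ≠ j → n ∉ B i) (hx : x ∈ I n) :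
    (l.sum fun i a => a • F p i) x = l j * c p n := by
  rw [Finsupp.sum, Finset.sum_apply]
  have hz : ∀ i ∈ l.support, i ≠ j → (l i • F p i) x = 0 := by
    intro i hi hij
    simp [F_apply_not_mem (hni i hi hij) hx]
  rw [Finset.sum_eq_single_of_mem j hj hz]
  simp [F_apply_mem hnj hx]

lemma not_memLp {p q : ℝ} (hp : 0 < p) (hq : p < q) (l : ℝ →₀ ℝ) (hl : l ≠ 0) :
    ¬ MemLp (l.sum fun i a => a • F p i) (ENNReal.ofReal q)
      (volume.restrict (Set.Icc (0:ℝ) 1)) := by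
  set μ := volume.restrict (Set.Icc (0:ℝ) 1) with hμ
  set f := l.sum fun i a => a • F p i with hf
  obtain ⟨j, hj⟩ : ∃ j, l j ≠ 0 := by
    by_contra hc
    push_neg at hc
    exact hl (Finsupp.ext hc)
  have hjs : j ∈ l.support := Finsupp.mem_support_iff.mpr hj
  obtain ⟨N, hN⟩ := one_le_t hp hq hj
  have hq0 : 0 < q := hp.trans hq
  set D : Set ℕ := (B j \ ⋃ i ∈ ((l.support.erase j) : Finset ℝ), B i) ∩ Set.Ici N with hD
  have hDinf : D.Infinite := by
    have h1 := (B_diff_infinite j (l.support.erase j)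
      (Finset.notMem_erase j _)).diff (Set.finite_Iio N)
    apply h1.mono
    intro n hn
    exact ⟨hn.1, Set.mem_Ici.mpr (not_lt.mp hn.2)⟩
  haveI : Infinite ↥D := hDinf.to_subtype
  intro hmem
  have hlint : ∫⁻ x, (↑‖f x‖₊ : ENNReal) ^ q ∂μ ≠ ⊤ := by
    have h2 := hmem.2
    rw [eLpNorm_eq_lintegral_rpow_enorm_toReal
      (by simp [ENNReal.ofReal_eq_zero]; linarith) ENNReal.ofReal_ne_top,
      ENNReal.toReal_ofReal hq0.le] at h2
    intro htop
    rw [show (∫⁻ x, ‖f x‖ₑ ^ q ∂μ) = ⊤ from htop] at h2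
    rw [ENNReal.top_rpow_of_pos (by positivity : (0:ℝ) < 1/q)] at h2
    exact (lt_irrefl _) h2
  apply hlint
  have hpt : ∀ x, (∑' n : ↥D, (I (n:ℕ)).indicator
      (fun _ => ENNReal.ofReal (|l j| ^ q * c p (n:ℕ) ^ q)) x) ≤ (↑‖f x‖₊ : ENNReal) ^ q := by
    intro x
    by_cases hex : ∃ n : ↥D, x ∈ I (n:ℕ)
    · obtain ⟨n, hn⟩ := hex
      rw [tsum_eq_single n (fun m hmn => Set.indicator_of_notMem
        (fun hxm => hmn (Subtype.ext (I_unique hxm hn))) _)]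
      rw [Set.indicator_of_mem hn]
      have hnD : (n:ℕ) ∈ (B j \ ⋃ i ∈ ((l.support.erase j) : Finset ℝ), B i) ∩ Set.Ici N := n.2
      have hnj : (n:ℕ) ∈ B j := hnD.1.1
      have hni : ∀ i ∈ l.support, i ≠ j → (n:ℕ) ∉ B i := by
        intro i hi hij hbi
        exact hnD.1.2 (Set.mem_biUnion (Finset.mem_coe.mpr (Finset.mem_erase.mpr ⟨hij, hi⟩)) hbi)
      have hfx : f x = l j * c p (n:ℕ) := sum_eval l hjs hnj hni hn
      have heq : (↑‖f x‖₊ : ENNReal) ^ q = ENNReal.ofReal (|l j| ^ q * c p (n:ℕ) ^ q) := by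
        rw [hfx, ← enorm_eq_nnnorm, Real.enorm_eq_ofReal_abs,
          ENNReal.ofReal_rpow_of_nonneg (abs_nonneg _) hq0.le, abs_mul,
          abs_of_pos (c_pos _), Real.mul_rpow (abs_nonneg _) (c_pos _).le]
      exact le_of_eq heq.symm
    · push_neg at hex
      have hz : ∀ n : ↥D, (I (n:ℕ)).indicator
          (fun _ => ENNReal.ofReal (|l j| ^ q * c p (n:ℕ) ^ q)) x = 0 :=
        fun n => Set.indicator_of_notMem (hex n) _
      rw [tsum_congr hz, tsum_zero]
      exact zero_le
  have hchain : (⊤ : ENNReal) ≤ ∫⁻ x, (↑‖f x‖₊ : ENNReal) ^ q ∂μ := by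
    calc (⊤:ENNReal) = ∑' _ : ↥D, (1:ENNReal) :=
        (ENNReal.tsum_const_eq_top_of_ne_zero one_ne_zero).symm
      _ ≤ ∑' n : ↥D, ENNReal.ofReal (|l j| ^ q * c p (n:ℕ) ^ q) * μ (I (n:ℕ)) := by
          apply ENNReal.tsum_le_tsum
          intro n
          rw [hμ, mu_I, ← ENNReal.ofReal_mul
            (mul_nonneg (Real.rpow_nonneg (abs_nonneg _) q)
              (Real.rpow_nonneg (c_pos _).le q))]
          rw [show (1:ENNReal) = ENNReal.ofReal 1 from ENNReal.ofReal_one.symm]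
          exact ENNReal.ofReal_le_ofReal (hN (n:ℕ) n.2.2)
      _ = ∑' n : ↥D, ∫⁻ x, (I (n:ℕ)).indicator
            (fun _ => ENNReal.ofReal (|l j| ^ q * c p (n:ℕ) ^ q)) x ∂μ := by
          refine tsum_congr fun n => ?_
          rw [lintegral_indicator (show MeasurableSet (I (n:ℕ)) from measurableSet_Ioc),
            setLIntegral_const]
      _ = ∫⁻ x, ∑' n : ↥D, (I (n:ℕ)).indicator
            (fun _ => ENNReal.ofReal (|l j| ^ q * c p (n:ℕ) ^ q)) x ∂μ :=
          (lintegral_tsum fun n : ↥D => (measurable_const.indicator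
            (show MeasurableSet (I ((n:ℕ))) from measurableSet_Ioc)).aemeasurable).symm
      _ ≤ ∫⁻ x, (↑‖f x‖₊ : ENNReal) ^ q ∂μ := lintegral_mono hpt
  exact top_le_iff.mp hchain

lemma linIndep {p : ℝ} (hp : 0 < p) : LinearIndependent ℝ (F p) := by
  rw [linearIndependent_iff']
  intro s g hsum j hj
  obtain ⟨n, hn⟩ := (B_diff_infinite j (s.erase j) (Finset.notMem_erase j s)).nonempty
  have hxI : ((2:ℝ)^n)⁻¹ ∈ I n := I_nonempty n
  have hsum2 : ∑ i ∈ s, g i * F p i (((2:ℝ)^n)⁻¹) = 0 := by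
    have h0 := congrFun hsum (((2:ℝ)^n)⁻¹)
    rw [Finset.sum_apply] at h0
    simpa using h0
  have hz : ∀ i ∈ s, i ≠ j → g i * F p i (((2:ℝ)^n)⁻¹) = 0 := by
    intro i hi hij
    rw [F_apply_not_mem (fun hbi => hn.2
      (Set.mem_biUnion (Finset.mem_coe.mpr (Finset.mem_erase.mpr ⟨hij, hi⟩)) hbi)) hxI, mul_zero]
  rw [Finset.sum_eq_single_of_mem j hj hz, F_apply_mem hn.1 hxI] at hsum2
  exact (mul_eq_zero.mp hsum2).resolve_right (c_pos n).ne'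

end

end LpLqAux

theorem lp_minus_lq_lineable (p : ℝ) (hp : 0 < p) :
    (∃ V : Submodule ℝ (ℝ → ℝ), Module.rank ℝ V = Cardinal.continuum ∧
      ∀ f ∈ V, f ≠ 0 →
        MemLp f (ENNReal.ofReal p) (volume.restrict (Set.Icc 0 1)) ∧
        ∀ q : ℝ, p < q →
          ¬ MemLp f (ENNReal.ofReal q) (volume.restrict (Set.Icc 0 1))) ∧
    ∃ f : ℝ → ℝ,
      MemLp f (ENNReal.ofReal p) (volume.restrict (Set.Icc 0 1)) ∧
      ∀ q : ℝ, p < q →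
        ¬ MemLp f (ENNReal.ofReal q) (volume.restrict (Set.Icc 0 1)) := by
  classical
  have hli := LpLqAux.linIndep hp
  set V : Submodule ℝ (ℝ → ℝ) := Submodule.span ℝ (Set.range (LpLqAux.F p)) with hV
  have hmain : ∀ f ∈ V, f ≠ 0 →
      MemLp f (ENNReal.ofReal p) (volume.restrict (Set.Icc 0 1)) ∧
      ∀ q : ℝ, p < q →
        ¬ MemLp f (ENNReal.ofReal q) (volume.restrict (Set.Icc 0 1)) := by
    intro f hf hf0
    rw [hV, Finsupp.mem_span_range_iff_exists_finsupp] at hf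
    obtain ⟨l, hl⟩ := hf
    have hlne : l ≠ 0 := by
      rintro rfl
      apply hf0
      rw [← hl]
      simp
    constructor
    · rw [← hl]
      have hmem : MemLp (∑ i ∈ l.support, l i • LpLqAux.F p i) (ENNReal.ofReal p)
          (volume.restrict (Set.Icc 0 1)) :=
        memLp_finsetSum' _ (fun i _ => (LpLqAux.memLp_F hp i).const_smul (l i))
      exact hmem
    · intro q hq
      rw [← hl]
      exact LpLqAux.not_memLp hp hq l hlne
  constructor
  · refine ⟨V, ?_, hmain⟩
    rw [hV]
    rw [rank_span hli, Cardinal.mk_range_eq _ hli.injective, Cardinal.mk_real]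
  · have hFmem : LpLqAux.F p 0 ∈ V := Submodule.subset_span (Set.mem_range_self 0)
    have hFne : LpLqAux.F p 0 ≠ 0 := by
      obtain ⟨n, hn⟩ := (LpLqAux.B_infinite 0).nonempty
      intro hzero
      have heval := LpLqAux.F_apply_mem (p := p) hn (LpLqAux.I_nonempty n)
      rw [hzero] at heval
      have hc0 : LpLqAux.c p n = 0 := by simpa using heval.symm
      exact (LpLqAux.c_pos n).ne' hc0
    obtain ⟨h1, h2⟩ := hmain _ hFmem hFne
    exact ⟨_, h1, h2⟩
end
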